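/- Let a, b > 0 with 2a ≥ b and 2b ≥ a, and let f : [−a, b] → {1, 0, −1} be Lebesgue measurable. Suppose that for all x₁, x₂, x₃ ∈ [−a, b] with x₁ + x₂ + x₃ = 0, the multiset {f(x₁), f(x₂), f(x₃)} is one of {1,1,−1}, {1,0,−1}, {1,−1,−1}, {0,0,0}. Then there exists κ ∈ ℝ such that f(x) = sgn(κx) for all x ∈ [−a, b]. -/

import Mathlib

open MeasureTheory Filter Metric

def Consistent (x y z : ℤ) : Prop :=
  ({x, y, z} : Multiset ℤ) = {1, 1, -1} ∨
  ({x, y, z} : Multiset ℤ) = {1, 0, -1} ∨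
  ({x, y, z} : Multiset ℤ) = {1, -1, -1} ∨
  ({x, y, z} : Multiset ℤ) = {0, 0, 0}

instance (x y z : ℤ) : Decidable (Consistent x y z) := by
  unfold Consistent; infer_instance

lemma prop_lemma (f : ℝ → ℤ) (m : ℝ) (σ : ℤ) (w δ : ℝ)
    (hδ : 0 < δ) (h3 : 3*δ ≤ w) (hwm : w + δ ≤ m/2)
    (hhalf : ∀ x : ℝ, 0 < x → x ≤ m/2 → f x = f (x/2))
    (hadd : ∀ x y : ℝ, 0 < x → 0 < y → x + y ≤ m → f x = σ → f y = σ → f (x+y) = σ)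
    (hint : ∀ t : ℝ, w - δ < t → t < w + δ → f t = σ) :
    ∀ x : ℝ, 0 < x → x ≤ m/2 → f x = σ := by
  have hw : 0 < w := by linarith
  have hδw : δ < w := by linarith
  have hwδ0 : 0 < w - δ := by linarith
  have hm : 0 < m := by nlinarith
  have step1 : ∀ n : ℕ, ∀ t : ℝ, (w - δ)/2^n < t → t < (w + δ)/2^n → f t = σ := by
    intro n
    induction n with
    | zero =>
      intro t h1 h2
      norm_num at h1 h2
      exact hint t h1 h2
    | succ n ih =>
      intro t h1 h2
      have h2n : (0:ℝ) < 2^n := by positivity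
      have ht0 : 0 < t := lt_trans (by positivity) h1
      rw [pow_succ] at h1 h2
      have e1 : (w - δ)/2^n < 2*t := by
        rw [div_lt_iff₀ (by positivity : (0:ℝ) < 2^n*2)] at h1
        rw [div_lt_iff₀ h2n]
        nlinarith
      have e2 : 2*t < (w + δ)/2^n := by
        rw [lt_div_iff₀ (by positivity : (0:ℝ) < 2^n*2)] at h2
        rw [lt_div_iff₀ h2n]
        nlinarith
      have hf2t : f (2*t) = σ := ih (2*t) e1 e2
      have h2tm : 2*t ≤ m/2 := by
        have h1p : (1:ℝ) ≤ 2^n := one_le_pow₀ (by norm_num)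
        have : (w + δ)/2^n ≤ w + δ := div_le_self (by linarith) h1p
        linarith
      have := hhalf (2*t) (by linarith) h2tm
      rw [this] at hf2t
      simpa using hf2t
  have step2 : ∀ k : ℕ, ∀ s : ℝ, 0 < s → f s = σ → ((k:ℝ)+1)*s ≤ m → f (((k:ℝ)+1)*s) = σ := by
    intro k
    induction k with
    | zero => intro s hs hfs hm'; simpa using hfs
    | succ k ih =>
      intro s hs hfs hm'
      push_cast at hm' ⊢
      have hk0 : (0:ℝ) ≤ (k:ℝ) := Nat.cast_nonneg k
      have hk1 : ((k:ℝ)+1)*s ≤ m := by nlinarith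
      have h1 : f (((k:ℝ)+1)*s) = σ := ih s hs hfs hk1
      have h2 : f (((k:ℝ)+1)*s + s) = σ := by
        apply hadd _ _ (by positivity) hs (by nlinarith) h1 hfs
      have e : ((k:ℝ)+1)*s + s = ((k:ℝ)+1+1)*s := by ring
      rw [e] at h2
      exact h2
  intro x hx hxm
  obtain ⟨n, hn⟩ : ∃ n : ℕ, w^2/(x*δ) < 2^n := pow_unbounded_of_one_lt _ one_lt_two
  have h2n : (0:ℝ) < 2^n := by positivity
  have hn' : w^2 < 2^n * (x*δ) := by
    rw [div_lt_iff₀ (by positivity)] at hn; linarith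
  set W := w/2^n with hW
  set D := δ/2^n with hD
  have hW0 : 0 < W := by positivity
  have hD0 : 0 < D := by positivity
  have hDW : D < W := by
    rw [hW, hD, div_lt_div_iff₀ h2n h2n]; nlinarith
  have hWD0 : 0 < W - D := by linarith
  have hWD0' : 0 < W + D := by linarith
  have eplus : W + D = (w+δ)/2^n := by rw [hW, hD, add_div]
  have eminus : W - D = (w-δ)/2^n := by rw [hW, hD, sub_div]
  have hxD : W^2 < x*D := by
    have eW : W^2 = w^2/((2:ℝ)^n)^2 := by rw [hW]; rw [div_pow]
    have eD : x*D = x*δ/2^n := by rw [hD]; ring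
    rw [eW, eD, div_lt_div_iff₀ (by positivity) (by positivity)]
    nlinarith
  have h5 : W - D < x/(W+D)*(2*D) := by
    have ha : x/(2*W) < x/(W+D) := div_lt_div_of_pos_left hx hWD0' (by linarith)
    have hb : x/(2*W)*(2*D) = x*D/W := by field_simp
    have hc : W < x*D/W := by
      rw [lt_div_iff₀ hW0]
      nlinarith
    have hd : x/(2*W)*(2*D) < x/(W+D)*(2*D) := by
      apply mul_lt_mul_of_pos_right ha (by positivity)
    rw [hb] at hd
    linarith
  have hgap : x/(W+D) + 1 < x/(W-D) := by
    rw [lt_div_iff₀ hWD0]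
    have hy : x/(W+D)*(W+D) = x := div_mul_cancel₀ _ (ne_of_gt hWD0')
    nlinarith
  set k : ℕ := ⌊x/(W+D)⌋₊ + 1 with hk
  have hk0 : 0 < (k:ℝ) := by positivity
  have hklb : x/(W+D) < (k:ℝ) := by
    rw [hk]; push_cast; exact Nat.lt_floor_add_one _
  have hkub : (k:ℝ) < x/(W-D) := by
    rw [hk]; push_cast
    have : (⌊x/(W+D)⌋₊ : ℝ) ≤ x/(W+D) := Nat.floor_le (by positivity)
    linarith
  set s := x/(k:ℝ) with hs
  have hs0 : 0 < s := by positivity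
  have hs1 : W - D < s := by
    rw [hs, lt_div_iff₀ hk0]
    rw [lt_div_iff₀ hWD0] at hkub
    linarith
  have hs2 : s < W + D := by
    rw [hs, div_lt_iff₀ hk0]
    rw [div_lt_iff₀ hWD0'] at hklb
    linarith
  have hfs : f s = σ := by
    apply step1 n s
    · rw [← eminus]; exact hs1
    · rw [← eplus]; exact hs2
  obtain ⟨k', hk'⟩ : ∃ k' : ℕ, k = k' + 1 := ⟨⌊x/(W+D)⌋₊, rfl⟩
  have hkc : (k:ℝ) = (k':ℝ) + 1 := by rw [hk']; push_cast; ring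
  have hx_eq : x = ((k':ℝ)+1) * s := by
    rw [hs, ← hkc, mul_div_cancel₀ _ (ne_of_gt hk0)]
  rw [hx_eq]
  apply step2 k' s hs0 hfs
  rw [← hx_eq]; linarith



lemma density_interval (S T : Set ℝ) (hSm : MeasurableSet S) (hTm : MeasurableSet T)
    (c : ℝ) (hS : S ⊆ Set.Ioc 0 c) (hT : T ⊆ Set.Ioc 0 c)
    (hSpos : volume S ≠ 0) (hTpos : ∀ ε : ℝ, 0 < ε → volume (T ∩ Set.Ioc 0 ε) ≠ 0) :
    ∃ w δ : ℝ, 0 < δ ∧ 3*δ ≤ w ∧ w + δ ≤ c ∧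
      ∀ t : ℝ, w - δ < t → t < w + δ → ∃ y x : ℝ, y ∈ S ∧ x ∈ T ∧ x < y ∧ y - t = x := by
  -- density point of S
  haveI : (ae (volume.restrict S)).NeBot := by
    refine ae_neBot.mpr ?_
    simpa [Measure.restrict_eq_zero] using hSpos
  obtain ⟨v, hvT, hvmem⟩ :=
    ((Besicovitch.ae_tendsto_measure_inter_div_of_measurableSet volume hSm).filter_mono
        (Measure.absolutelyContinuous_of_le Measure.restrict_le_self).ae_le |>.and
      (ae_restrict_mem hSm)).exists
  rw [Set.indicator_of_mem hvmem] at hvT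
  simp only [Pi.one_apply] at hvT
  have hv0 : 0 < v := (hS hvmem).1
  have hvc : v ≤ c := (hS hvmem).2
  -- density point of T' = T ∩ (0, v/2]
  set T' := T ∩ Set.Ioc 0 (v/2) with hT'def
  have hT'm : MeasurableSet T' := hTm.inter measurableSet_Ioc
  have hT'pos : volume T' ≠ 0 := hTpos (v/2) (by positivity)
  haveI : (ae (volume.restrict T')).NeBot := by
    refine ae_neBot.mpr ?_
    simpa [Measure.restrict_eq_zero] using hT'pos
  obtain ⟨u, huT, humem⟩ :=
    ((Besicovitch.ae_tendsto_measure_inter_div_of_measurableSet volume hT'm).filter_mono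
        (Measure.absolutelyContinuous_of_le Measure.restrict_le_self).ae_le |>.and
      (ae_restrict_mem hT'm)).exists
  rw [Set.indicator_of_mem humem] at huT
  simp only [Pi.one_apply] at huT
  have hu0 : 0 < u := humem.2.1
  have huv2 : u ≤ v/2 := humem.2.2
  -- choose r
  have e1 : ∀ᶠ r in nhdsWithin (0:ℝ) (Set.Ioi 0),
      (7/8 : ENNReal) < volume (S ∩ closedBall v r) / volume (closedBall v r) :=
    hvT.eventually (eventually_gt_nhds (by
      rw [ENNReal.div_lt_iff (by norm_num) (by norm_num)]; norm_num))
  have e2 : ∀ᶠ r in nhdsWithin (0:ℝ) (Set.Ioi 0),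
      (7/8 : ENNReal) < volume (T' ∩ closedBall u r) / volume (closedBall u r) :=
    huT.eventually (eventually_gt_nhds (by
      rw [ENNReal.div_lt_iff (by norm_num) (by norm_num)]; norm_num))
  have e3 : ∀ᶠ r in nhdsWithin (0:ℝ) (Set.Ioi 0), r < u/3 :=
    eventually_nhdsWithin_of_eventually_nhds (eventually_lt_nhds (by positivity))
  have e4 : ∀ᶠ r in nhdsWithin (0:ℝ) (Set.Ioi 0), (0:ℝ) < r := eventually_mem_nhdsWithin
  obtain ⟨r, h1r, h2r, h3r, h4r⟩ := (e1.and (e2.and (e3.and e4))).exists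
  have hr0 : 0 < r := h4r
  have hru : r < u/3 := h3r
  refine ⟨v - u, r/2, by positivity, by linarith, by linarith, ?_⟩
  intro t ht1 ht2
  -- measure bounds
  have hb1 : volume (closedBall v r) = ENNReal.ofReal (2*r) := by
    rw [Real.volume_closedBall]
  have hb2 : volume (closedBall u r) = ENNReal.ofReal (2*r) := by
    rw [Real.volume_closedBall]
  have hne0 : ENNReal.ofReal (2*r) ≠ 0 := (ENNReal.ofReal_pos.mpr (by linarith)).ne'
  have hnetop : ENNReal.ofReal (2*r) ≠ ⊤ := ENNReal.ofReal_ne_top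
  have hS78 : (7/8 : ENNReal) * ENNReal.ofReal (2*r) < volume (S ∩ closedBall v r) := by
    rw [← hb1]
    exact (ENNReal.lt_div_iff_mul_lt (Or.inl (by rw [hb1]; exact hne0))
      (Or.inl (by rw [hb1]; exact hnetop))).1 h1r
  have hT78 : (7/8 : ENNReal) * ENNReal.ofReal (2*r) < volume (T' ∩ closedBall u r) := by
    rw [← hb2]
    exact (ENNReal.lt_div_iff_mul_lt (Or.inl (by rw [hb2]; exact hne0))
      (Or.inl (by rw [hb2]; exact hnetop))).1 h2r
  set A : Set ℝ := (fun y => y - t) ⁻¹' (T' ∩ closedBall u r) with hAdef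
  have hAvol : volume A = volume (T' ∩ closedBall u r) := by
    rw [hAdef]
    have : (fun y : ℝ => y - t) = (fun y : ℝ => y + (-t)) := by funext y; ring
    rw [this]
    exact measure_preimage_add_right volume (-t) _
  set B : Set ℝ := S ∩ closedBall v r with hBdef
  have hBm : MeasurableSet B := hSm.inter measurableSet_closedBall
  have hsubA : A ⊆ closedBall v (3/2*r) := by
    intro y hy
    have h6 : dist (y - t) u ≤ r := hy.2
    rw [Real.dist_eq] at h6
    rw [mem_closedBall, Real.dist_eq]
    rw [abs_le] at h6 ⊢
    constructor <;> [linarith [h6.1]; linarith [h6.2]]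
  have hsubB : B ⊆ closedBall v (3/2*r) := fun y hy =>
    closedBall_subset_closedBall (by linarith) hy.2
  -- A and B must intersect
  by_contra hcon
  push_neg at hcon
  have hdisj : Disjoint A B := by
    rw [Set.disjoint_left]
    intro y hyA hyB
    have hyS : y ∈ S := hyB.1
    have hxT : y - t ∈ T := hyA.1.1
    have hxIoc : y - t ∈ Set.Ioc 0 (v/2) := hyA.1.2
    have hxy : y - t < y := by
      have h6 : dist y v ≤ r := hyB.2
      rw [Real.dist_eq, abs_le] at h6
      have : y ≥ v - r := by linarith [h6.1]
      have : y - t ≤ v/2 := hxIoc.2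
      linarith
    exact hcon y (y - t) hyS hxT hxy rfl
  have hunion : volume (A ∪ B) = volume A + volume B := measure_union hdisj hBm
  have hle : volume (A ∪ B) ≤ ENNReal.ofReal (3*r) := by
    have : A ∪ B ⊆ closedBall v (3/2*r) := Set.union_subset hsubA hsubB
    calc volume (A ∪ B) ≤ volume (closedBall v (3/2*r)) := measure_mono this
      _ = ENNReal.ofReal (3*r) := by rw [Real.volume_closedBall]; congr 1; ring
  have hsum : ENNReal.ofReal (3*r) < volume A + volume B := by
    have h7 : (7/8 : ENNReal) * ENNReal.ofReal (2*r) + (7/8 : ENNReal) * ENNReal.ofReal (2*r)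
        ≤ volume A + volume B := by
      rw [hAvol]
      exact add_le_add hT78.le hS78.le
    have h8 : ENNReal.ofReal (3*r) < (7/8 : ENNReal) * ENNReal.ofReal (2*r) +
        (7/8 : ENNReal) * ENNReal.ofReal (2*r) := by
      have : (7/8 : ENNReal) * ENNReal.ofReal (2*r) = ENNReal.ofReal (7/4*r) := by
        rw [show (7/8 : ENNReal) = ENNReal.ofReal (7/8) by
            rw [ENNReal.ofReal_div_of_pos (by norm_num), ENNReal.ofReal_ofNat,
              ENNReal.ofReal_ofNat],
          ← ENNReal.ofReal_mul (by norm_num)]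
        congr 1; ring
      rw [this, ← ENNReal.ofReal_add (by linarith) (by linarith)]
      rw [ENNReal.ofReal_lt_ofReal_iff (by linarith)]
      linarith
    exact lt_of_lt_of_le h8 h7
  rw [← hunion] at hsum
  exact absurd hle (not_le.mpr hsum)

set_option maxHeartbeats 2000000 in
theorem stmt1 (a b : ℝ) (ha : 0 < a) (hb : 0 < b)
    (hab : b ≤ 2 * a) (hba : a ≤ 2 * b)
    (f : ℝ → ℤ)
    (hrange : ∀ x ∈ Set.Icc (-a) b, f x = 1 ∨ f x = 0 ∨ f x = -1)
    (hmeas : ∀ v : ℤ, MeasurableSet {x ∈ Set.Icc (-a) b | f x = v})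
    (hcons : ∀ x₁ ∈ Set.Icc (-a) b, ∀ x₂ ∈ Set.Icc (-a) b, ∀ x₃ ∈ Set.Icc (-a) b,
      x₁ + x₂ + x₃ = 0 → Consistent (f x₁) (f x₂) (f x₃)) :
    ∃ κ : ℝ, ∀ x ∈ Set.Icc (-a) b, (f x : ℝ) = Real.sign (κ * x) := by
  set m := min a b with hmdef
  have hma : m ≤ a := min_le_left a b
  have hmb : m ≤ b := min_le_right a b
  have hm0 : 0 < m := lt_min ha hb
  have hbm : b/2 ≤ m := le_min (by linarith) (by linarith)
  have ham : a/2 ≤ m := le_min (by linarith) (by linarith)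
  have memIcc : ∀ x : ℝ, -a ≤ x → x ≤ b → x ∈ Set.Icc (-a) b :=
    fun x h1 h2 => Set.mem_Icc.mpr ⟨h1, h2⟩
  have memPos : ∀ z : ℝ, 0 < z → z ≤ m → z ∈ Set.Icc (-a) b :=
    fun z h1 h2 => memIcc z (by linarith) (by linarith)
  have h0mem : (0:ℝ) ∈ Set.Icc (-a) b := memIcc 0 (by linarith) (by linarith)
  -- f 0 = 0
  have hf0 : f 0 = 0 := by
    have hc := hcons 0 h0mem 0 h0mem 0 h0mem (by ring)
    rcases hrange 0 h0mem with h|h|h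
    · exfalso; rw [h] at hc; revert hc; decide
    · exact h
    · exfalso; rw [h] at hc; revert hc; decide
  -- oddness
  have hodd : ∀ z : ℝ, 0 < z → z ≤ m → f (-z) = - f z := by
    intro z h1 h2
    have hmem1 : z ∈ Set.Icc (-a) b := memPos z h1 h2
    have hmem2 : -z ∈ Set.Icc (-a) b := memIcc _ (by linarith) (by linarith)
    have hc := hcons z hmem1 (-z) hmem2 0 h0mem (by ring)
    rw [hf0] at hc
    rcases hrange z hmem1 with h|h|h <;> rcases hrange (-z) hmem2 with g|g|g <;>
      rw [h, g] at hc ⊢ <;> revert hc <;> decide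
  -- master lemma
  have hM : ∀ x y : ℝ, 0 < x → 0 < y → x + y ≤ m → Consistent (f x) (f y) (-(f (x+y))) := by
    intro x y hx hy hxy
    have hmx := memPos x hx (by linarith)
    have hmy := memPos y hy (by linarith)
    have hms : -(x+y) ∈ Set.Icc (-a) b := memIcc _ (by linarith) (by linarith)
    have hc := hcons x hmx y hmy (-(x+y)) hms (by ring)
    rwa [hodd (x+y) (by linarith) hxy] at hc
  -- halving
  have hhalfIcc : ∀ x ∈ Set.Icc (-a) b, f x = f (x/2) := by
    intro x hx
    obtain ⟨hx1, hx2⟩ := hx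
    have hx' : x ∈ Set.Icc (-a) b := memIcc x hx1 hx2
    rcases lt_trichotomy x 0 with h|h|h
    · have hm1 : -(x/2) ∈ Set.Icc (-a) b := memIcc _ (by linarith) (by linarith)
      have hm2 : x/2 ∈ Set.Icc (-a) b := memIcc _ (by linarith) (by linarith)
      have hc := hcons x hx' (-(x/2)) hm1 (-(x/2)) hm1 (by ring)
      have ho := hodd (-(x/2)) (by linarith) (by linarith)
      rw [neg_neg] at ho
      have ho' : f (-(x/2)) = - f (x/2) := by omega
      rw [ho'] at hc
      rcases hrange x hx' with h1|h1|h1 <;> rcases hrange (x/2) hm2 with h2|h2|h2 <;>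
        rw [h1, h2] at hc ⊢ <;> revert hc <;> decide
    · rw [h]; norm_num
    · have hm1 : -(x/2) ∈ Set.Icc (-a) b := memIcc _ (by linarith) (by linarith)
      have hm2 : x/2 ∈ Set.Icc (-a) b := memIcc _ (by linarith) (by linarith)
      have hc := hcons x hx' (-(x/2)) hm1 (-(x/2)) hm1 (by ring)
      rw [hodd (x/2) (by linarith) (by linarith)] at hc
      rcases hrange x hx' with h1|h1|h1 <;> rcases hrange (x/2) hm2 with h2|h2|h2 <;>
        rw [h1, h2] at hc ⊢ <;> revert hc <;> decide
  have hdivmem : ∀ x : ℝ, x ∈ Set.Icc (-a) b → ∀ c : ℝ, 1 ≤ c → x / c ∈ Set.Icc (-a) b := by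
    intro x hx c hc
    obtain ⟨hx1, hx2⟩ := hx
    have hc0 : 0 < c := by linarith
    rcases le_total 0 x with h|h
    · exact memIcc _ (le_trans (by linarith) (div_nonneg h hc0.le))
        (le_trans (div_le_self h hc) hx2)
    · refine memIcc _ (le_trans hx1 ?_)
        (le_trans (div_nonpos_iff.mpr (Or.inr ⟨h, hc0.le⟩)) hb.le)
      rw [le_div_iff₀ hc0]
      nlinarith
  have hhalfn : ∀ n : ℕ, ∀ x ∈ Set.Icc (-a) b, f x = f (x/2^n) := by
    intro n
    induction n with
    | zero => intro x _; norm_num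
    | succ n ih =>
      intro x hx
      have hmem : x/2^n ∈ Set.Icc (-a) b := hdivmem x hx _ (one_le_pow₀ (by norm_num))
      have h2 := hhalfIcc (x/2^n) hmem
      rw [ih x hx, h2, div_div, ← pow_succ]
  have hadd : ∀ x y : ℝ, 0 < x → 0 < y → x + y ≤ m → f x = f y → f (x+y) = f x := by
    intro x y hx hy hxy he
    have hc := hM x y hx hy hxy
    rw [← he] at hc
    rcases hrange x (memPos x hx (by linarith)) with h1|h1|h1 <;>
      rcases hrange (x+y) (memPos _ (by linarith) hxy) with h2|h2|h2 <;>
      rw [h1, h2] at hc ⊢ <;> revert hc <;> decide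
  have sdown : ∀ ε : ℝ, 0 < ε → ∀ x : ℝ, 0 < x → x ≤ b → ∃ z, 0 < z ∧ z ≤ ε ∧ f z = f x := by
    intro ε hε x hx hxb
    obtain ⟨n, hn⟩ : ∃ n : ℕ, x/ε < 2^n := pow_unbounded_of_one_lt _ one_lt_two
    rw [div_lt_iff₀ hε] at hn
    refine ⟨x/2^n, by positivity, ?_, (hhalfn n x (memIcc x (by linarith) hxb)).symm⟩
    rw [div_le_iff₀ (by positivity)]
    nlinarith
  have sneg : ∀ x : ℝ, -a ≤ x → x < 0 → ∃ z : ℝ, 0 < z ∧ z ≤ m/2 ∧ f x = - f z := by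
    intro x hx1 hx2
    obtain ⟨n, hn⟩ : ∃ n : ℕ, (-x)/(m/2) < 2^n := pow_unbounded_of_one_lt _ one_lt_two
    rw [div_lt_iff₀ (by positivity)] at hn
    refine ⟨(-x)/2^n, div_pos (by linarith) (by positivity), ?_, ?_⟩
    · rw [div_le_iff₀ (by positivity)]
      nlinarith
    · have h1 := hhalfn n x (memIcc x hx1 (by linarith))
      have h2 : x/2^n = -((-x)/2^n) := by ring
      rw [h1, h2, hodd ((-x)/2^n) (div_pos (by linarith) (by positivity)) ?hle]
      case hle =>
        rw [div_le_iff₀ (by positivity)]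
        nlinarith [one_le_pow₀ (by norm_num : (1:ℝ) ≤ 2) (n := n)]
  -- main trichotomy
  have key : ∃ σ : ℤ, ∀ x : ℝ, 0 < x → x ≤ m/2 → f x = σ := by
    by_cases hP : ∃ p : ℝ, 0 < p ∧ p ≤ m/2 ∧ f p = 1
    · by_cases hN : ∃ q : ℝ, 0 < q ∧ q ≤ m/2 ∧ f q = -1
      · -- measure argument: contradiction
        exfalso
        obtain ⟨p, hp0, hpm, hfp⟩ := hP
        obtain ⟨q, hq0, hqm, hfq⟩ := hN
        set S : ℤ → Set ℝ := fun v => {x : ℝ | x ∈ Set.Ioc 0 (m/2) ∧ f x = v} with hSdef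
        have hIocIcc : ∀ x : ℝ, x ∈ Set.Ioc 0 (m/2) → x ∈ Set.Icc (-a) b := fun x hx =>
          memPos x hx.1 (by linarith [hx.2])
        have hSmeas : ∀ v : ℤ, MeasurableSet (S v) := by
          intro v
          have he : S v = {x | x ∈ Set.Icc (-a) b ∧ f x = v} ∩ Set.Ioc 0 (m/2) := by
            ext x
            constructor
            · intro hx; exact ⟨⟨hIocIcc x hx.1, hx.2⟩, hx.1⟩
            · intro hx; exact ⟨hx.2, hx.1.2⟩
          rw [he]
          exact (hmeas v).inter measurableSet_Ioc
        have hSsub : ∀ v : ℤ, S v ⊆ Set.Ioc 0 (m/2) := fun v x hx => hx.1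
        have hscale : ∀ (v : ℤ) (ε : ℝ), 0 < ε → volume (S v) ≠ 0 →
            volume (S v ∩ Set.Ioc 0 ε) ≠ 0 := by
          intro v ε hε hv
          obtain ⟨n, hn⟩ : ∃ n : ℕ, (m/2)/ε < 2^n := pow_unbounded_of_one_lt _ one_lt_two
          rw [div_lt_iff₀ hε] at hn
          have h2n : (0:ℝ) < 2^n := by positivity
          have hsub : ((2:ℝ)^n * ·) ⁻¹' (S v) ⊆ S v ∩ Set.Ioc 0 ε := by
            intro x hx
            simp only [Set.mem_preimage] at hx
            obtain ⟨⟨hx1, hx2⟩, hx3⟩ := hx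
            have hx0 : 0 < x := by nlinarith
            have h1p : (1:ℝ) ≤ 2^n := one_le_pow₀ (by norm_num)
            have hxe : x ≤ m/2 := by nlinarith
            have hfx : f x = v := by
              have hmem : (2:ℝ)^n * x ∈ Set.Icc (-a) b := hIocIcc _ ⟨hx1, hx2⟩
              have h4 := hhalfn n _ hmem
              rw [mul_div_cancel_left₀ x (ne_of_gt h2n)] at h4
              rw [← h4]; exact hx3
            exact ⟨⟨⟨hx0, hxe⟩, hfx⟩, ⟨hx0, by nlinarith⟩⟩
          have hpre : volume (((2:ℝ)^n * ·) ⁻¹' (S v)) =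
              ENNReal.ofReal |((2:ℝ)^n)⁻¹| * volume (S v) :=
            Real.volume_preimage_mul_left (ne_of_gt h2n) _
          have hne : volume (((2:ℝ)^n * ·) ⁻¹' (S v)) ≠ 0 := by
            rw [hpre]
            exact mul_ne_zero (ENNReal.ofReal_pos.mpr (by positivity)).ne' hv
          refine fun hzero => hne ?_
          exact le_antisymm (hzero ▸ measure_mono hsub) (zero_le)
        by_cases hZ0 : volume (S 0) = 0
        · by_cases h10 : volume (S 1) = 0
          · -- reflection at p
            have h9 : volume (Set.Ioo 0 p) ≤ volume (S (-1) ∩ Set.Ioo 0 p) +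
                (volume (S 1) + volume (S 0)) := by
              have hsub : Set.Ioo 0 p ⊆ (S (-1) ∩ Set.Ioo 0 p) ∪ (S 1 ∪ S 0) := by
                intro x hx
                have hxI : x ∈ Set.Ioc 0 (m/2) := ⟨hx.1, by linarith [hx.2]⟩
                rcases hrange x (hIocIcc x hxI) with h|h|h
                · right; left; exact ⟨hxI, h⟩
                · right; right; exact ⟨hxI, h⟩
                · left; exact ⟨⟨hxI, h⟩, hx⟩
              calc volume (Set.Ioo 0 p) ≤ _ := measure_mono hsub
                _ ≤ _ := (measure_union_le _ _).trans (add_le_add le_rfl (measure_union_le _ _))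
            rw [h10, hZ0, Real.volume_Ioo, sub_zero, add_zero, add_zero] at h9
            have hrefl : S (-1) ∩ Set.Ioo 0 p ⊆ (fun y => p - y) ⁻¹' (S 1) := by
              intro y hy
              obtain ⟨⟨hyI, hyf⟩, hy0, hyp⟩ := hy
              simp only [Set.mem_preimage]
              have hc := hM y (p - y) hy0 (by linarith) (by
                rw [show y + (p - y) = p by ring]; linarith)
              rw [show y + (p - y) = p by ring, hyf, hfp] at hc
              refine ⟨⟨by linarith, by linarith⟩, ?_⟩
              rcases hrange (p - y) (memPos _ (by linarith) (by linarith)) with g|g|g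
              · exact g
              · exfalso; rw [g] at hc; revert hc; decide
              · exfalso; rw [g] at hc; revert hc; decide
            have hvol : volume ((fun y => p - y) ⁻¹' (S 1)) = volume (S 1) := by
              have e : (fun y : ℝ => p - y) = (fun z : ℝ => p + z) ∘ (fun y : ℝ => -y) := by
                funext y; simp [sub_eq_add_neg]
              rw [e, Set.preimage_comp, Measure.measure_preimage_neg, measure_preimage_add]
            have : volume (S (-1) ∩ Set.Ioo 0 p) = 0 := by
              refine le_antisymm ?_ (zero_le)
              calc volume (S (-1) ∩ Set.Ioo 0 p) ≤ volume ((fun y => p - y) ⁻¹' (S 1)) :=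
                    measure_mono hrefl
                _ = 0 := by rw [hvol, h10]
            rw [this] at h9
            simp only [nonpos_iff_eq_zero, ENNReal.ofReal_eq_zero] at h9
            · exact absurd h9 (by simp; linarith)
          · by_cases hm1 : volume (S (-1)) = 0
            · -- reflection at q
              have h9 : volume (Set.Ioo 0 q) ≤ volume (S 1 ∩ Set.Ioo 0 q) +
                  (volume (S (-1)) + volume (S 0)) := by
                have hsub : Set.Ioo 0 q ⊆ (S 1 ∩ Set.Ioo 0 q) ∪ (S (-1) ∪ S 0) := by
                  intro x hx
                  have hxI : x ∈ Set.Ioc 0 (m/2) := ⟨hx.1, by linarith [hx.2]⟩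
                  rcases hrange x (hIocIcc x hxI) with h|h|h
                  · left; exact ⟨⟨hxI, h⟩, hx⟩
                  · right; right; exact ⟨hxI, h⟩
                  · right; left; exact ⟨hxI, h⟩
                calc volume (Set.Ioo 0 q) ≤ _ := measure_mono hsub
                  _ ≤ _ := (measure_union_le _ _).trans (add_le_add le_rfl (measure_union_le _ _))
              rw [hm1, hZ0, Real.volume_Ioo, sub_zero, add_zero, add_zero] at h9
              have hrefl : S 1 ∩ Set.Ioo 0 q ⊆ (fun y => q - y) ⁻¹' (S (-1)) := by
                intro y hy
                obtain ⟨⟨hyI, hyf⟩, hy0, hyp⟩ := hy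
                simp only [Set.mem_preimage]
                have hc := hM y (q - y) hy0 (by linarith) (by
                  rw [show y + (q - y) = q by ring]; linarith)
                rw [show y + (q - y) = q by ring, hyf, hfq] at hc
                refine ⟨⟨by linarith, by linarith⟩, ?_⟩
                rcases hrange (q - y) (memPos _ (by linarith) (by linarith)) with g|g|g
                · exfalso; rw [g] at hc; revert hc; decide
                · exfalso; rw [g] at hc; revert hc; decide
                · exact g
              have hvol : volume ((fun y => q - y) ⁻¹' (S (-1))) = volume (S (-1)) := by
                have e : (fun y : ℝ => q - y) = (fun z : ℝ => q + z) ∘ (fun y : ℝ => -y) := by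
                  funext y; simp [sub_eq_add_neg]
                rw [e, Set.preimage_comp, Measure.measure_preimage_neg, measure_preimage_add]
              have : volume (S 1 ∩ Set.Ioo 0 q) = 0 := by
                refine le_antisymm ?_ (zero_le)
                calc volume (S 1 ∩ Set.Ioo 0 q) ≤ volume ((fun y => q - y) ⁻¹' (S (-1))) :=
                      measure_mono hrefl
                  _ = 0 := by rw [hvol, hm1]
              rw [this] at h9
              simp only [nonpos_iff_eq_zero, ENNReal.ofReal_eq_zero] at h9
              · exact absurd h9 (by simp; linarith)
            · -- both S 1 and S (-1) have positive measure
              obtain ⟨w, δ, hδ, h3, hwc, hrep⟩ := density_interval (S (-1)) (S 1)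
                (hSmeas _) (hSmeas _) (m/2) (hSsub _) (hSsub _) hm1
                (fun ε hε => hscale 1 ε hε h10)
              have hint : ∀ t : ℝ, w - δ < t → t < w + δ → f t = -1 := by
                intro t ht1 ht2
                obtain ⟨y, x, hyS, hxT, hxy, hyx⟩ := hrep t ht1 ht2
                have hx0 : 0 < x := hxT.1.1
                have ht0 : 0 < t := by linarith
                have hym : y ≤ m/2 := hyS.1.2
                have hc := hM x t hx0 ht0 (by linarith)
                rw [show x + t = y by linarith, hxT.2, hyS.2] at hc
                rcases hrange t (memPos t ht0 (by linarith)) with g|g|g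
                · exfalso; rw [g] at hc; revert hc; decide
                · exfalso; rw [g] at hc; revert hc; decide
                · exact g
              have hall : ∀ x : ℝ, 0 < x → x ≤ m/2 → f x = -1 :=
                prop_lemma f m (-1) w δ hδ h3 hwc
                  (fun x h1 h2 => hhalfIcc x (memPos x h1 (by linarith)))
                  (fun x y h1 h2 h3' hfx hfy =>
                    (hadd x y h1 h2 h3' (by rw [hfx, hfy])).trans hfx)
                  hint
              have hbad := hall p hp0 hpm
              rw [hfp] at hbad
              exact absurd hbad (by decide)
        · -- S 0 has positive measure
          obtain ⟨w, δ, hδ, h3, hwc, hrep⟩ := density_interval (S 0) (S 0)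
            (hSmeas _) (hSmeas _) (m/2) (hSsub _) (hSsub _) hZ0
            (fun ε hε => hscale 0 ε hε hZ0)
          have hint : ∀ t : ℝ, w - δ < t → t < w + δ → f t = 0 := by
            intro t ht1 ht2
            obtain ⟨y, x, hyS, hxT, hxy, hyx⟩ := hrep t ht1 ht2
            have hx0 : 0 < x := hxT.1.1
            have ht0 : 0 < t := by linarith
            have hym : y ≤ m/2 := hyS.1.2
            have hc := hM x t hx0 ht0 (by linarith)
            rw [show x + t = y by linarith, hxT.2, hyS.2] at hc
            rcases hrange t (memPos t ht0 (by linarith)) with g|g|g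
            · exfalso; rw [g] at hc; revert hc; decide
            · exact g
            · exfalso; rw [g] at hc; revert hc; decide
          have hall : ∀ x : ℝ, 0 < x → x ≤ m/2 → f x = 0 :=
            prop_lemma f m 0 w δ hδ h3 hwc
              (fun x h1 h2 => hhalfIcc x (memPos x h1 (by linarith)))
              (fun x y h1 h2 h3' hfx hfy =>
                (hadd x y h1 h2 h3' (by rw [hfx, hfy])).trans hfx)
              hint
          have hbad := hall p hp0 hpm
          rw [hfp] at hbad
          exact absurd hbad (by decide)
      · -- P exists, no N : all values 1
        refine ⟨1, fun x hx hxm => ?_⟩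
        rcases hrange x (memPos x hx (by linarith)) with h|h|h
        · exact h
        · exfalso
          obtain ⟨p, hp0, hpm, hfp⟩ := hP
          obtain ⟨p', hp1, hp2, hp3⟩ := sdown (x/2) (by positivity) p hp0 (by linarith)
          have hp3' : f p' = 1 := by rw [hp3, hfp]
          have hc := hM p' (x - p') hp1 (by linarith) (by
            rw [show p' + (x - p') = x by ring]; linarith)
          rw [show p' + (x - p') = x by ring, hp3', h] at hc
          rcases hrange (x - p') (memPos _ (by linarith) (by linarith)) with g|g|g
          · rw [g] at hc; revert hc; decide
          · rw [g] at hc; revert hc; decide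
          · exact hN ⟨x - p', by linarith, by linarith, g⟩
        · exact absurd ⟨x, hx, hxm, h⟩ hN
    · by_cases hN : ∃ q : ℝ, 0 < q ∧ q ≤ m/2 ∧ f q = -1
      · -- N exists, no P : all values -1
        refine ⟨-1, fun x hx hxm => ?_⟩
        rcases hrange x (memPos x hx (by linarith)) with h|h|h
        · exact absurd ⟨x, hx, hxm, h⟩ hP
        · exfalso
          obtain ⟨q, hq0, hqm, hfq⟩ := hN
          obtain ⟨q', hq1, hq2, hq3⟩ := sdown (x/2) (by positivity) q hq0 (by linarith)
          have hq3' : f q' = -1 := by rw [hq3, hfq]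
          have hc := hM q' (x - q') hq1 (by linarith) (by
            rw [show q' + (x - q') = x by ring]; linarith)
          rw [show q' + (x - q') = x by ring, hq3', h] at hc
          rcases hrange (x - q') (memPos _ (by linarith) (by linarith)) with g|g|g
          · exact hP ⟨x - q', by linarith, by linarith, g⟩
          · rw [g] at hc; revert hc; decide
          · rw [g] at hc; revert hc; decide
        · exact h
      · -- neither : all values 0
        refine ⟨0, fun x hx hxm => ?_⟩
        rcases hrange x (memPos x hx (by linarith)) with h|h|h
        · exact absurd ⟨x, hx, hxm, h⟩ hP
        · exact h
        · exact absurd ⟨x, hx, hxm, h⟩ hN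
  -- conclusion
  obtain ⟨σ, hall⟩ := key
  have hm2mem : (m/2 : ℝ) ∈ Set.Icc (-a) b := memPos (m/2) (by positivity) (by linarith)
  have hσval : σ = 1 ∨ σ = 0 ∨ σ = -1 := by
    have := hrange (m/2) hm2mem
    rwa [hall (m/2) (by positivity) le_rfl] at this
  rcases hσval with rfl|rfl|rfl
  · refine ⟨1, fun x hx => ?_⟩
    obtain ⟨hx1, hx2⟩ := hx
    rcases lt_trichotomy x 0 with h|h|h
    · obtain ⟨z, hz1, hz2, hz3⟩ := sneg x hx1 h
      have hfx : f x = -1 := by rw [hz3, hall z hz1 hz2]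
      rw [hfx, one_mul, Real.sign_of_neg h]
      norm_num
    · rw [h, hf0]
      simp [Real.sign_zero]
    · obtain ⟨z, hz1, hz2, hz3⟩ := sdown (m/2) (by positivity) x h hx2
      have hfx : f x = 1 := by rw [← hz3, hall z hz1 hz2]
      rw [hfx, one_mul, Real.sign_of_pos h]
      norm_num
  · refine ⟨0, fun x hx => ?_⟩
    obtain ⟨hx1, hx2⟩ := hx
    have hfx : f x = 0 := by
      rcases lt_trichotomy x 0 with h|h|h
      · obtain ⟨z, hz1, hz2, hz3⟩ := sneg x hx1 h
        rw [hz3, hall z hz1 hz2]; ring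
      · rw [h, hf0]
      · obtain ⟨z, hz1, hz2, hz3⟩ := sdown (m/2) (by positivity) x h hx2
        rw [← hz3, hall z hz1 hz2]
    rw [hfx, zero_mul, Real.sign_zero]
    norm_num
  · refine ⟨-1, fun x hx => ?_⟩
    obtain ⟨hx1, hx2⟩ := hx
    rcases lt_trichotomy x 0 with h|h|h
    · obtain ⟨z, hz1, hz2, hz3⟩ := sneg x hx1 h
      have hfx : f x = 1 := by rw [hz3, hall z hz1 hz2]; ring
      rw [hfx, neg_one_mul, Real.sign_of_pos (by linarith : 0 < -x)]
      norm_num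
    · rw [h, hf0]
      simp [Real.sign_zero]
    · obtain ⟨z, hz1, hz2, hz3⟩ := sdown (m/2) (by positivity) x h hx2
      have hfx : f x = -1 := by rw [← hz3, hall z hz1 hz2]
      rw [hfx, neg_one_mul, Real.sign_of_neg (by linarith : -x < 0)]
      norm_num
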